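/- Let f ∈ C²(ℝ₊,ℝ). The function g(C) = f(det C) is convex on the set PSym(n) of real symmetric positive definite n×n matrices if and only if for all C ∈ PSym(n) and all symmetric n×n matrices H one has [f''(det C)·det(C) + f'(det C)]·⟨C⁻¹,H⟩² − f'(det C)·⟨HC⁻¹, C⁻¹H⟩ ≥ 0. -/

import Mathlib

open Matrix

/-- The trace inner product `⟨A, B⟩ = tr (A Bᵀ)` on real `n × n` matrices. -/
noncomputable def tinner {n : ℕ} (A B : Matrix (Fin n) (Fin n) ℝ) : ℝ :=
  (A * Bᵀ).trace

section Aux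

variable {n : ℕ}


lemma sum_det_updateRow_eq (M B : Matrix (Fin n) (Fin n) ℝ) :
    ∑ i, (M.updateRow i (B i)).det = (M.adjugate * B).trace := by
  have h1 : ∀ i : Fin n, (M.updateRow i (B i)).det = ∑ j, B i j * M.adjugate j i := by
    intro i
    have hB : B i = ∑ j, B i j • (Pi.single j (1:ℝ) : Fin n → ℝ) := by
      funext k
      simp [Pi.single_apply]
    have hlin := (Matrix.detRowAlternating (R := ℝ) (n := Fin n)).toMultilinearMap.toLinearMap M i
    have key : ∀ r : Fin n → ℝ, (M.updateRow i r).det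
        = (Matrix.detRowAlternating (R := ℝ) (n := Fin n)).toMultilinearMap.toLinearMap M i r := by
      intro r
      rfl
    rw [key]
    conv_lhs => rw [hB]
    rw [map_sum]
    refine Finset.sum_congr rfl fun j _ => ?_
    rw [_root_.map_smul, smul_eq_mul, ← key, ← Matrix.adjugate_apply]
  simp only [h1, Matrix.trace, Matrix.diag, Matrix.mul_apply]
  rw [Finset.sum_comm]
  refine Finset.sum_congr rfl fun j _ => Finset.sum_congr rfl fun i _ => mul_comm _ _

noncomputable def detCM (n : ℕ) : ContinuousMultilinearMap ℝ (fun _ : Fin n => (Fin n → ℝ)) ℝ :=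
  (Matrix.detRowAlternating (R := ℝ) (n := Fin n)).toMultilinearMap.mkContinuous
    (Fintype.card (Equiv.Perm (Fin n))) <| by
    intro m
    have h1 : (Matrix.detRowAlternating (R := ℝ) (n := Fin n)).toMultilinearMap m
        = Matrix.det (Matrix.of fun i j => m i j) := rfl
    rw [h1, Matrix.det_apply]
    refine (norm_sum_le _ _).trans ?_
    have h2 : ∀ σ : Equiv.Perm (Fin n),
        ‖Equiv.Perm.sign σ • ∏ i, Matrix.of (fun i j => m i j) (σ i) i‖ ≤ ∏ i, ‖m i‖ := by
      intro σ
      have : ‖Equiv.Perm.sign σ • ∏ i, Matrix.of (fun i j => m i j) (σ i) i‖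
          = ‖∏ i, m (σ i) i‖ := by
        rcases Int.units_eq_one_or (Equiv.Perm.sign σ) with h | h <;> simp [h]
      rw [this]
      have h3 : ‖∏ i, m (σ i) i‖ ≤ ∏ i, ‖m (σ i)‖ := by
        rw [Real.norm_eq_abs, Finset.abs_prod]
        refine Finset.prod_le_prod (fun i _ => abs_nonneg _) (fun i _ => ?_)
        simpa [Real.norm_eq_abs] using norm_le_pi_norm (m (σ i)) i
      refine h3.trans ?_
      have h4 : ∏ i, ‖m i‖ = ∏ i, ‖m (σ i)‖ := (Equiv.prod_comp σ fun i => ‖m i‖).symm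
      rw [h4]
    calc ∑ σ : Equiv.Perm (Fin n), ‖Equiv.Perm.sign σ • ∏ i, Matrix.of (fun i j => m i j) (σ i) i‖
        ≤ ∑ _σ : Equiv.Perm (Fin n), ∏ i, ‖m i‖ := Finset.sum_le_sum fun σ _ => h2 σ
      _ = (Fintype.card (Equiv.Perm (Fin n))) * ∏ i, ‖m i‖ := by
          rw [Finset.sum_const, Finset.card_univ, nsmul_eq_mul]

lemma detCM_apply (M : Matrix (Fin n) (Fin n) ℝ) : detCM n (fun i => M i) = M.det := rfl

lemma hasDerivAt_line_det (A B : Matrix (Fin n) (Fin n) ℝ) (t₀ : ℝ) :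
    HasDerivAt (fun t : ℝ => (A + t • B).det) (((A + t₀ • B).adjugate * B).trace) t₀ := by
  classical
  let A' : Fin n → Fin n → ℝ := fun i j => A i j
  let B' : Fin n → Fin n → ℝ := fun i j => B i j
  have hrow : ∀ t : ℝ, (A' + t • B') = (fun i => (A + t • B) i) := by
    intro t
    funext i j
    simp [A', B', Matrix.add_apply, Matrix.smul_apply]
  have hc : HasDerivAt (fun t : ℝ => A' + t • B') B' t₀ := by
    simpa using ((hasDerivAt_id t₀).smul_const B').const_add A'
  have hD := ((detCM n).hasFDerivAt (x := A' + t₀ • B')).comp_hasDerivAt t₀ hc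
  have hfun : (fun t : ℝ => detCM n (A' + t • B')) = fun t : ℝ => (A + t • B).det := by
    funext t
    rw [hrow t]
    exact detCM_apply (A + t • B)
  have hval : (detCM n).linearDeriv (A' + t₀ • B') B' = ((A + t₀ • B).adjugate * B).trace := by
    rw [ContinuousMultilinearMap.linearDeriv_apply, ← sum_det_updateRow_eq (A + t₀ • B) B,
      hrow t₀]
    refine Finset.sum_congr rfl fun i _ => ?_
    rfl
  rw [hval] at hD
  exact hfun ▸ hD

section LinftyCalc

attribute [local instance] Matrix.linftyOpNormedAddCommGroup Matrix.linftyOpNormedSpace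
  Matrix.linftyOpNormedRing Matrix.linftyOpNormedAlgebra

lemma hasDerivAt_line_inv (A B : Matrix (Fin n) (Fin n) ℝ) (t₀ : ℝ)
    (h : IsUnit (A + t₀ • B).det) :
    HasDerivAt (fun t : ℝ => (A + t • B)⁻¹)
      (-((A + t₀ • B)⁻¹ * B * (A + t₀ • B)⁻¹)) t₀ := by
  haveI : CompleteSpace (Matrix (Fin n) (Fin n) ℝ) := FiniteDimensional.complete ℝ _
  have hM : IsUnit (A + t₀ • B) := (Matrix.isUnit_iff_isUnit_det _).mpr h
  have hline : HasDerivAt (fun t : ℝ => A + t • B) B t₀ := by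
    exact (((hasDerivAt_id t₀).smul_const B).const_add A).congr_deriv (one_smul _ _)
  have h1 := hasFDerivAt_ringInverse (𝕜 := ℝ) hM.unit
  rw [hM.unit_spec] at h1
  have h2 := h1.comp_hasDerivAt t₀ hline
  have hfun : (fun t : ℝ => Ring.inverse (A + t • B)) = fun t : ℝ => (A + t • B)⁻¹ := by
    funext t
    rw [Matrix.nonsing_inv_eq_ringInverse]
  have hval : (-(ContinuousLinearMap.mulLeftRight ℝ (Matrix (Fin n) (Fin n) ℝ)
        ↑hM.unit⁻¹ ↑hM.unit⁻¹)) B = -((A + t₀ • B)⁻¹ * B * (A + t₀ • B)⁻¹) := by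
    have hu : (↑hM.unit⁻¹ : Matrix (Fin n) (Fin n) ℝ) = (A + t₀ • B)⁻¹ := by
      rw [Matrix.coe_units_inv, hM.unit_spec]
    simp [hu, ContinuousLinearMap.mulLeftRight_apply]
  rw [hval] at h2
  exact hfun ▸ h2

lemma hasDerivAt_line_trinv (A B : Matrix (Fin n) (Fin n) ℝ) (t₀ : ℝ)
    (h : IsUnit (A + t₀ • B).det) :
    HasDerivAt (fun t : ℝ => ((A + t • B)⁻¹ * B).trace)
      (-((A + t₀ • B)⁻¹ * B * (A + t₀ • B)⁻¹ * B).trace) t₀ := by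
  haveI : FiniteDimensional ℝ (Matrix (Fin n) (Fin n) ℝ) := by infer_instance
  let L : Matrix (Fin n) (Fin n) ℝ →ₗ[ℝ] ℝ :=
    (Matrix.traceLinearMap (Fin n) ℝ ℝ).comp (LinearMap.mulRight ℝ B)
  have hc := (LinearMap.toContinuousLinearMap L).hasFDerivAt.comp_hasDerivAt t₀
    (hasDerivAt_line_inv A B t₀ h)
  have : ∀ X : Matrix (Fin n) (Fin n) ℝ, LinearMap.toContinuousLinearMap L X = (X * B).trace := by
    intro X; rfl
  exact hc.congr_deriv ((this _).trans (by simp [neg_mul]))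

end LinftyCalc

lemma adjugate_eq_det_smul_inv (M : Matrix (Fin n) (Fin n) ℝ) (h : IsUnit M.det) :
    M.adjugate = M.det • M⁻¹ := by
  calc M.adjugate = (M⁻¹ * M) * M.adjugate := by rw [Matrix.nonsing_inv_mul M h, one_mul]
    _ = M⁻¹ * (M.det • 1) := by rw [mul_assoc, Matrix.mul_adjugate]
    _ = M.det • M⁻¹ := by rw [mul_smul_comm, mul_one]

lemma trace_adj_eq (M B : Matrix (Fin n) (Fin n) ℝ) (h : IsUnit M.det) :
    (M.adjugate * B).trace = M.det * (M⁻¹ * B).trace := by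
  rw [adjugate_eq_det_smul_inv M h, smul_mul_assoc, Matrix.trace_smul, smul_eq_mul]

lemma hasDerivAt_line_adjtrace (A B : Matrix (Fin n) (Fin n) ℝ) (t₀ : ℝ)
    (h : IsUnit (A + t₀ • B).det) :
    HasDerivAt (fun t : ℝ => ((A + t • B).adjugate * B).trace)
      ((A + t₀ • B).det * (((A + t₀ • B)⁻¹ * B).trace ^ 2
        - ((A + t₀ • B)⁻¹ * B * ((A + t₀ • B)⁻¹ * B)).trace)) t₀ := by
  have hdet := hasDerivAt_line_det A B t₀
  have htr := hasDerivAt_line_trinv A B t₀ h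
  have hprod := hdet.mul htr
  have hevent : (fun t : ℝ => ((A + t • B).adjugate * B).trace)
      =ᶠ[nhds t₀] (fun t : ℝ => (A + t • B).det * ((A + t • B)⁻¹ * B).trace) := by
    have hcont : ContinuousAt (fun t : ℝ => (A + t • B).det) t₀ :=
      (hasDerivAt_line_det A B t₀).differentiableAt.continuousAt
    have hne : (A + t₀ • B).det ≠ 0 := by
      intro h0
      rw [h0] at h
      exact h.ne_zero rfl
    filter_upwards [hcont.eventually_ne hne] with t ht
    exact trace_adj_eq _ B (isUnit_iff_ne_zero.mpr ht)
  have h2 := hprod.congr_of_eventuallyEq hevent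
  refine h2.congr_deriv ?_
  have ha : ((A + t₀ • B).adjugate * B).trace = (A + t₀ • B).det * ((A + t₀ • B)⁻¹ * B).trace :=
    trace_adj_eq _ B h
  rw [ha, ← mul_assoc ((A + t₀ • B)⁻¹ * B)]
  ring

section FLayer

variable {f : ℝ → ℝ}

lemma hasDerivAt_f_of_pos (hf : ContDiffOn ℝ 2 f (Set.Ioi 0)) {x : ℝ} (hx : 0 < x) :
    HasDerivAt f (deriv f x) x := by
  have h1 : DifferentiableOn ℝ f (Set.Ioi 0) := hf.differentiableOn (by norm_num)
  exact ((h1 x hx).differentiableAt (Ioi_mem_nhds hx)).hasDerivAt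

lemma hasDerivAt_deriv_f_of_pos (hf : ContDiffOn ℝ 2 f (Set.Ioi 0)) {x : ℝ} (hx : 0 < x) :
    HasDerivAt (deriv f) (deriv (deriv f) x) x := by
  have h1 : ContDiffOn ℝ 1 (derivWithin f (Set.Ioi 0)) (Set.Ioi 0) :=
    hf.derivWithin (uniqueDiffOn_Ioi 0) (by norm_num)
  have h2 : ContDiffOn ℝ 1 (deriv f) (Set.Ioi 0) := by
    refine h1.congr fun y hy => ?_
    exact (derivWithin_of_isOpen isOpen_Ioi hy).symm
  have h3 : DifferentiableOn ℝ (deriv f) (Set.Ioi 0) := h2.differentiableOn (by norm_num)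
  exact ((h3 x hx).differentiableAt (Ioi_mem_nhds hx)).hasDerivAt

/-- First derivative of `t ↦ f (det (A + t B))` at a pos-def point. -/
lemma hasDerivAt_phi (hf : ContDiffOn ℝ 2 f (Set.Ioi 0)) (A B : Matrix (Fin n) (Fin n) ℝ)
    (t₀ : ℝ) (h : (A + t₀ • B).PosDef) :
    HasDerivAt (fun t : ℝ => f (A + t • B).det)
      (deriv f (A + t₀ • B).det * ((A + t₀ • B).adjugate * B).trace) t₀ :=
  (hasDerivAt_f_of_pos hf h.det_pos).comp t₀ (hasDerivAt_line_det A B t₀)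

/-- Second derivative of `t ↦ f (det (A + t B))` at a pos-def point. -/
lemma hasDerivAt_p (hf : ContDiffOn ℝ 2 f (Set.Ioi 0)) (A B : Matrix (Fin n) (Fin n) ℝ)
    (t₀ : ℝ) (h : (A + t₀ • B).PosDef) :
    HasDerivAt (fun t : ℝ => deriv f (A + t • B).det * ((A + t • B).adjugate * B).trace)
      (deriv (deriv f) (A + t₀ • B).det * ((A + t₀ • B).adjugate * B).trace
          * ((A + t₀ • B).adjugate * B).trace
        + deriv f (A + t₀ • B).det * ((A + t₀ • B).det * (((A + t₀ • B)⁻¹ * B).trace ^ 2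
            - ((A + t₀ • B)⁻¹ * B * ((A + t₀ • B)⁻¹ * B)).trace))) t₀ := by
  have h1 : HasDerivAt (fun t : ℝ => deriv f (A + t • B).det)
      (deriv (deriv f) (A + t₀ • B).det * ((A + t₀ • B).adjugate * B).trace) t₀ :=
    HasDerivAt.comp (h₂ := deriv f) t₀ (hasDerivAt_deriv_f_of_pos hf h.det_pos) (hasDerivAt_line_det A B t₀)
  exact h1.mul (hasDerivAt_line_adjtrace A B t₀ h.det_pos.ne'.isUnit)

end FLayer

lemma posdef_transpose_eq {C : Matrix (Fin n) (Fin n) ℝ} (hC : C.IsHermitian) : Cᵀ = C := by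
  rw [← Matrix.conjTranspose_eq_transpose_of_trivial]
  exact hC

lemma second_deriv_eq (f : ℝ → ℝ) (C B : Matrix (Fin n) (Fin n) ℝ)
    (hC : C.PosDef) (hB : B.IsSymm) :
    deriv (deriv f) C.det * (C.adjugate * B).trace * (C.adjugate * B).trace
        + deriv f C.det * (C.det * ((C⁻¹ * B).trace ^ 2 - (C⁻¹ * B * (C⁻¹ * B)).trace))
      = C.det * ((deriv (deriv f) C.det * C.det + deriv f C.det) * (tinner C⁻¹ B) ^ 2
          - deriv f C.det * tinner (B * C⁻¹) (C⁻¹ * B)) := by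
  have hCt : Cᵀ = C := posdef_transpose_eq hC.1
  have hCinvT : (C⁻¹)ᵀ = C⁻¹ := by rw [Matrix.transpose_nonsing_inv, hCt]
  have t1 : tinner C⁻¹ B = (C⁻¹ * B).trace := by
    unfold tinner
    rw [hB.eq]
  have t2 : tinner (B * C⁻¹) (C⁻¹ * B) = (C⁻¹ * B * (C⁻¹ * B)).trace := by
    unfold tinner
    rw [Matrix.transpose_mul, hB.eq, hCinvT]
    have h := Matrix.trace_mul_comm (C⁻¹) (B * C⁻¹ * B)
    simp only [mul_assoc] at h ⊢
    exact h.symm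
  have hadj : (C.adjugate * B).trace = C.det * (C⁻¹ * B).trace :=
    trace_adj_eq C B hC.det_pos.ne'.isUnit
  rw [t1, t2, hadj]
  ring

lemma star_vec (x : Fin n → ℝ) : star x = x := by
  funext i
  exact star_trivial _

lemma smul_isHermitian {H : Matrix (Fin n) (Fin n) ℝ} (hH : H.IsHermitian) (t : ℝ) :
    (t • H).IsHermitian := by
  unfold Matrix.IsHermitian
  rw [Matrix.conjTranspose_smul, hH.eq]
  simp

lemma convex_posDef : Convex ℝ {C : Matrix (Fin n) (Fin n) ℝ | C.PosDef} := by
  intro x hx y hy a b ha hb hab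
  refine Matrix.PosDef.of_dotProduct_mulVec_pos ?_ ?_
  · unfold Matrix.IsHermitian
    rw [Matrix.conjTranspose_add, (smul_isHermitian hx.1 a).eq, (smul_isHermitian hy.1 b).eq]
  · intro z hz
    have h1 := hx.dotProduct_mulVec_pos hz
    have h2 := hy.dotProduct_mulVec_pos hz
    have hexp : star z ⬝ᵥ ((a • x + b • y) *ᵥ z)
        = a * (star z ⬝ᵥ (x *ᵥ z)) + b * (star z ⬝ᵥ (y *ᵥ z)) := by
      rw [Matrix.add_mulVec, dotProduct_add, Matrix.smul_mulVec,
        Matrix.smul_mulVec, dotProduct_smul, dotProduct_smul, smul_eq_mul, smul_eq_mul]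
    rw [hexp]
    rcases lt_or_eq_of_le ha with ha' | ha'
    · have : 0 ≤ b * (star z ⬝ᵥ (y *ᵥ z)) := mul_nonneg hb h2.le
      nlinarith
    · have hb' : b = 1 := by rw [← ha'] at hab; simpa using hab
      rw [← ha', hb']
      simpa using h2

lemma exists_eps (C H : Matrix (Fin n) (Fin n) ℝ) (hC : C.PosDef) (hH : H.IsHermitian) :
    ∃ ε > 0, ∀ t : ℝ, |t| < ε → (C + t • H).PosDef := by
  rcases Nat.eq_zero_or_pos n with hn | hn
  · subst hn
    refine ⟨1, one_pos, fun t _ => ⟨Subsingleton.elim _ _, fun x hx => ?_⟩⟩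
    exact absurd (Subsingleton.elim x 0) hx
  · haveI : Nonempty (Fin n) := ⟨⟨0, hn⟩⟩
    have hQcont : Continuous fun x : Fin n → ℝ => x ⬝ᵥ (C *ᵥ x) := by
      show Continuous fun x : Fin n → ℝ => ∑ i, x i * ∑ j, C i j * x j
      exact continuous_finset_sum _ fun i _ => (continuous_apply i).mul
        (continuous_finset_sum _ fun j _ => continuous_const.mul (continuous_apply j))
    have hcomp : IsCompact (Metric.sphere (0 : Fin n → ℝ) 1) := isCompact_sphere _ _
    have hne : (Metric.sphere (0 : Fin n → ℝ) 1).Nonempty :=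
      NormedSpace.sphere_nonempty.mpr zero_le_one
    obtain ⟨x₀, hx₀mem, hmin⟩ := hcomp.exists_isMinOn hne hQcont.continuousOn
    have hx₀norm : ‖x₀‖ = 1 := by rwa [mem_sphere_zero_iff_norm] at hx₀mem
    have hx₀ne : x₀ ≠ 0 := by
      intro h0
      rw [h0] at hx₀norm
      simp at hx₀norm
    set m := x₀ ⬝ᵥ (C *ᵥ x₀) with hm_def
    have hm : 0 < m := by
      have := hC.dotProduct_mulVec_pos hx₀ne
      rwa [star_vec] at this
    have hlow : ∀ x : Fin n → ℝ, x ≠ 0 → m * ‖x‖ ^ 2 ≤ x ⬝ᵥ (C *ᵥ x) := by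
      intro x hx
      have hnx : 0 < ‖x‖ := norm_pos_iff.mpr hx
      set y := (‖x‖)⁻¹ • x with hy_def
      have hy : ‖y‖ = 1 := by
        rw [hy_def, norm_smul]
        simp [abs_of_pos hnx, inv_mul_cancel₀ hnx.ne']
      have hymem : y ∈ Metric.sphere (0 : Fin n → ℝ) 1 := by
        rwa [mem_sphere_zero_iff_norm]
      have h1 : m ≤ y ⬝ᵥ (C *ᵥ y) := hmin hymem
      have h2 : y ⬝ᵥ (C *ᵥ y) = (‖x‖)⁻¹ * ((‖x‖)⁻¹ * (x ⬝ᵥ (C *ᵥ x))) := by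
        rw [hy_def, Matrix.mulVec_smul, smul_dotProduct, dotProduct_smul, smul_eq_mul,
          smul_eq_mul]
      have h3 := mul_le_mul_of_nonneg_right h1 (sq_nonneg ‖x‖)
      calc m * ‖x‖ ^ 2 ≤ (y ⬝ᵥ (C *ᵥ y)) * ‖x‖ ^ 2 := h3
        _ = x ⬝ᵥ (C *ᵥ x) := by
            rw [h2]
            field_simp
    set K := ∑ i, ∑ j, |H i j| with hK_def
    have hK0 : 0 ≤ K :=
      Finset.sum_nonneg fun i _ => Finset.sum_nonneg fun j _ => abs_nonneg _
    have hHbound : ∀ x : Fin n → ℝ, |x ⬝ᵥ (H *ᵥ x)| ≤ K * ‖x‖ ^ 2 := by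
      intro x
      have step : ∀ i : Fin n, |x i * ∑ j, H i j * x j| ≤ ∑ j, |H i j| * (‖x‖ * ‖x‖) := by
        intro i
        rw [abs_mul]
        have hxi : |x i| ≤ ‖x‖ := by simpa [Real.norm_eq_abs] using norm_le_pi_norm x i
        have hsum : |∑ j, H i j * x j| ≤ ∑ j, |H i j| * ‖x‖ := by
          refine (Finset.abs_sum_le_sum_abs _ _).trans (Finset.sum_le_sum fun j _ => ?_)
          rw [abs_mul]
          exact mul_le_mul_of_nonneg_left
            (by simpa [Real.norm_eq_abs] using norm_le_pi_norm x j) (abs_nonneg _)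
        calc |x i| * |∑ j, H i j * x j| ≤ ‖x‖ * ∑ j, |H i j| * ‖x‖ :=
              mul_le_mul hxi hsum (abs_nonneg _) (norm_nonneg _)
          _ = ∑ j, |H i j| * (‖x‖ * ‖x‖) := by
              rw [Finset.mul_sum]
              exact Finset.sum_congr rfl fun j _ => by ring
      calc |x ⬝ᵥ (H *ᵥ x)| = |∑ i, x i * ∑ j, H i j * x j| := rfl
        _ ≤ ∑ i, |x i * ∑ j, H i j * x j| := Finset.abs_sum_le_sum_abs _ _
        _ ≤ ∑ i, ∑ j, |H i j| * (‖x‖ * ‖x‖) := Finset.sum_le_sum fun i _ => step i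
        _ = K * ‖x‖ ^ 2 := by
            rw [hK_def, Finset.sum_mul]
            refine Finset.sum_congr rfl fun i _ => ?_
            rw [Finset.sum_mul]
            exact Finset.sum_congr rfl fun j _ => by ring
    have hεpos : 0 < m / (K + 1) := div_pos hm (by linarith)
    refine ⟨m / (K + 1), hεpos, fun t ht => ?_⟩
    refine Matrix.PosDef.of_dotProduct_mulVec_pos (Matrix.IsHermitian.add hC.1 (smul_isHermitian hH t)) fun x hx => ?_
    rw [_root_.star_vec, Matrix.add_mulVec, dotProduct_add, Matrix.smul_mulVec,
      dotProduct_smul, smul_eq_mul]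
    have hnx : 0 < ‖x‖ := norm_pos_iff.mpr hx
    have e1 : -(|t| * |x ⬝ᵥ (H *ᵥ x)|) ≤ t * (x ⬝ᵥ (H *ᵥ x)) := by
      rw [← abs_mul]
      exact neg_abs_le _
    have e2 : |t| * |x ⬝ᵥ (H *ᵥ x)| ≤ (m / (K + 1)) * (K * ‖x‖ ^ 2) :=
      mul_le_mul ht.le (hHbound x) (abs_nonneg _) hεpos.le
    have e3 : m * ‖x‖ ^ 2 ≤ x ⬝ᵥ (C *ᵥ x) := hlow x hx
    have e4 : (m / (K + 1)) * (K * ‖x‖ ^ 2) < m * ‖x‖ ^ 2 := by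
      rw [div_mul_eq_mul_div, div_lt_iff₀ (by linarith : (0:ℝ) < K + 1)]
      nlinarith [pow_pos hnx 2]
    linarith


lemma isHermitian_of_isSymm {n : ℕ} {H : Matrix (Fin n) (Fin n) ℝ} (hH : H.IsSymm) :
    H.IsHermitian :=
  (Matrix.conjTranspose_eq_transpose_of_trivial H).trans hH.eq

end Aux

theorem convexOn_f_det_iff_second_deriv_cond (n : ℕ) (f : ℝ → ℝ)
    (hf : ContDiffOn ℝ 2 f (Set.Ioi 0)) :
    ConvexOn ℝ {C : Matrix (Fin n) (Fin n) ℝ | C.PosDef} (fun C => f C.det) ↔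
      ∀ C : Matrix (Fin n) (Fin n) ℝ, C.PosDef →
        ∀ H : Matrix (Fin n) (Fin n) ℝ, H.IsSymm →
          0 ≤ (deriv (deriv f) C.det * C.det + deriv f C.det) * (tinner C⁻¹ H) ^ 2 -
              deriv f C.det * tinner (H * C⁻¹) (C⁻¹ * H) := by
  constructor
  · -- convexity implies the pointwise second-order condition
    intro hconv C hC H hH
    obtain ⟨ε, hε, hball⟩ := exists_eps C H hC (isHermitian_of_isSymm hH)
    set φ : ℝ → ℝ := fun t => f (C + t • H).det with hφ_def
    have hballIoo : ∀ t ∈ Set.Ioo (-ε) ε, (C + t • H).PosDef := fun t ht =>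
      hball t (abs_lt.mpr ⟨ht.1, ht.2⟩)
    have hconvφ : ConvexOn ℝ (Set.Ioo (-ε) ε) φ := by
      refine ⟨convex_Ioo _ _, ?_⟩
      intro t₁ h₁ t₂ h₂ a b ha hb hab
      have k₁ : (C + t₁ • H).PosDef := hballIoo t₁ h₁
      have k₂ : (C + t₂ • H).PosDef := hballIoo t₂ h₂
      have halg : C + (a * t₁ + b * t₂) • H = a • (C + t₁ • H) + b • (C + t₂ • H) := by
        have hCeq : a • C + b • C = C := by rw [← add_smul, hab, one_smul]
        have h1 : a • (C + t₁ • H) + b • (C + t₂ • H)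
            = (a • C + b • C) + (a • (t₁ • H) + b • (t₂ • H)) := by
          rw [smul_add, smul_add]
          abel
        rw [h1, hCeq, add_smul, mul_smul, mul_smul]
      have hineq := hconv.2 k₁ k₂ ha hb hab
      simp only [smul_eq_mul] at hineq ⊢
      calc φ (a * t₁ + b * t₂) = f ((a • (C + t₁ • H) + b • (C + t₂ • H)).det) := by
            rw [hφ_def]
            simp only
            rw [halg]
        _ ≤ a * f (C + t₁ • H).det + b * f (C + t₂ • H).det := hineq
        _ = a * φ t₁ + b * φ t₂ := rfl
    have hmem0 : (C + (0:ℝ) • H).PosDef := by simpa using hC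
    have hIooNhds : Set.Ioo (-ε) ε ∈ nhds (0:ℝ) := Ioo_mem_nhds (by linarith) hε
    have hevent : deriv φ =ᶠ[nhds (0:ℝ)]
        (fun t => deriv f (C + t • H).det * ((C + t • H).adjugate * H).trace) := by
      filter_upwards [hIooNhds] with t ht
      exact (hasDerivAt_phi hf C H t (hballIoo t ht)).deriv
    have hp := hasDerivAt_p hf C H 0 hmem0
    simp only [zero_smul, add_zero] at hp
    have hd2 := hp.congr_of_eventuallyEq hevent
    have hdiff : ∀ t ∈ Set.Ioo (-ε) ε, DifferentiableAt ℝ φ t := fun t ht =>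
      (hasDerivAt_phi hf C H t (hballIoo t ht)).differentiableAt
    have hmono := hconvφ.monotoneOn_deriv hdiff
    have h0mem : (0:ℝ) ∈ Set.Ioo (-ε) ε := by constructor <;> linarith
    have hFnonneg : 0 ≤ deriv (deriv f) C.det * (C.adjugate * H).trace * (C.adjugate * H).trace
        + deriv f C.det * (C.det * ((C⁻¹ * H).trace ^ 2 - (C⁻¹ * H * (C⁻¹ * H)).trace)) := by
      have htend := hasDerivAt_iff_tendsto_slope.mp hd2
      refine ge_of_tendsto htend ?_
      filter_upwards [nhdsWithin_le_nhds hIooNhds, self_mem_nhdsWithin] with t htIoo htne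
      have hslope : slope (deriv φ) 0 t = (deriv φ t - deriv φ 0) / t := by
        rw [slope_def_field, sub_zero]
      rw [hslope]
      rcases lt_or_gt_of_ne (htne : t ≠ (0:ℝ)) with hlt | hgt
      · exact div_nonneg_iff.mpr (Or.inr ⟨sub_nonpos.mpr (hmono htIoo h0mem hlt.le), hlt.le⟩)
      · exact div_nonneg (sub_nonneg.mpr (hmono h0mem htIoo hgt.le)) hgt.le
    rw [second_deriv_eq f C H hC hH] at hFnonneg
    exact (mul_nonneg_iff_of_pos_left hC.det_pos).mp hFnonneg
  · -- the pointwise second-order condition implies convexity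
    intro hcond
    refine ⟨convex_posDef, ?_⟩
    intro C₁ h₁ C₂ h₂ a b ha hb hab
    set B : Matrix (Fin n) (Fin n) ℝ := C₂ - C₁ with hB_def
    have hmem : ∀ t ∈ Set.Icc (0:ℝ) 1, (C₁ + t • B).PosDef := by
      intro t ht
      have hposdef := convex_posDef h₁ h₂ (by linarith [ht.2] : (0:ℝ) ≤ 1 - t) ht.1
        (by ring : (1 - t) + t = 1)
      have : C₁ + t • B = (1 - t) • C₁ + t • C₂ := by
        rw [hB_def, smul_sub, sub_smul, one_smul]
        abel
      rw [this]
      exact hposdef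
    have hsymmB : B.IsSymm := by
      unfold Matrix.IsSymm
      rw [hB_def, Matrix.transpose_sub, posdef_transpose_eq h₁.1, posdef_transpose_eq h₂.1]
    have hφ : ConvexOn ℝ (Set.Icc (0:ℝ) 1) (fun t => f (C₁ + t • B).det) := by
      refine convexOn_of_deriv2_nonneg (convex_Icc 0 1) ?_ ?_ ?_ ?_
      · exact fun t ht =>
          ((hasDerivAt_phi hf C₁ B t (hmem t ht)).continuousAt).continuousWithinAt
      · rw [interior_Icc]
        exact fun t ht => ((hasDerivAt_phi hf C₁ B t
          (hmem t (Set.Ioo_subset_Icc_self ht))).differentiableAt).differentiableWithinAt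
      · rw [interior_Icc]
        intro t ht
        have hev : deriv (fun s => f (C₁ + s • B).det) =ᶠ[nhds t]
            (fun s => deriv f (C₁ + s • B).det * ((C₁ + s • B).adjugate * B).trace) := by
          filter_upwards [Ioo_mem_nhds ht.1 ht.2] with s hs
          exact (hasDerivAt_phi hf C₁ B s (hmem s (Set.Ioo_subset_Icc_self hs))).deriv
        exact (((hasDerivAt_p hf C₁ B t
          (hmem t (Set.Ioo_subset_Icc_self ht))).congr_of_eventuallyEq
            hev).differentiableAt).differentiableWithinAt
      · rw [interior_Icc]
        intro t ht
        have hposdef : (C₁ + t • B).PosDef := hmem t (Set.Ioo_subset_Icc_self ht)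
        have hev : deriv (fun s => f (C₁ + s • B).det) =ᶠ[nhds t]
            (fun s => deriv f (C₁ + s • B).det * ((C₁ + s • B).adjugate * B).trace) := by
          filter_upwards [Ioo_mem_nhds ht.1 ht.2] with s hs
          exact (hasDerivAt_phi hf C₁ B s (hmem s (Set.Ioo_subset_Icc_self hs))).deriv
        have hd2 := (hasDerivAt_p hf C₁ B t hposdef).congr_of_eventuallyEq hev
        have : deriv^[2] (fun s => f (C₁ + s • B).det) t
            = deriv (deriv fun s => f (C₁ + s • B).det) t := rfl
        rw [this, hd2.deriv, second_deriv_eq f (C₁ + t • B) B hposdef hsymmB]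
        exact mul_nonneg hposdef.det_pos.le
          (hcond (C₁ + t • B) hposdef B hsymmB)
    have h0mem : (0:ℝ) ∈ Set.Icc (0:ℝ) 1 := ⟨le_refl 0, zero_le_one⟩
    have h1mem : (1:ℝ) ∈ Set.Icc (0:ℝ) 1 := ⟨zero_le_one, le_refl 1⟩
    have hres := hφ.2 h0mem h1mem ha hb hab
    simp only [smul_eq_mul, mul_zero, mul_one, zero_add] at hres ⊢
    have he0 : C₁ + (0:ℝ) • B = C₁ := by simp
    have he1 : C₁ + (1:ℝ) • B = C₂ := by
      rw [hB_def, one_smul]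
      abel
    have heb : C₁ + b • B = a • C₁ + b • C₂ := by
      have haeq : a = 1 - b := by linarith
      rw [hB_def, haeq, smul_sub, sub_smul, one_smul]
      abel
    rw [he0, he1, heb] at hres
    exact hres
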